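/- Fix reals Ξ > 1, c > -1, Z > 0, ν, λ, and a continuous function ρ : [1,Ξ] → ℝ. Define W(X) := √(X+c)/√Z − ν + (1/2)·∫₁^Ξ ρ(T) dT /((√(X+c)+√(T+c))·√(T+c)), ρ₀ := 1/√Z − (1/2)·∫₁^Ξ ρ(T)·(T+c)^{-3/2} dT, and assume ρ₀ ≠ 0. Define G₂(U|V) := 4λ²/(√(U+c)·√(V+c)·(√(U+c)+√(V+c))²), for U ≠ V define H(U,V|S) := 16λ²·(∂/∂V)[(G₂(U|S)−G₂(V|S))/(U−V)], and define G₃(X|Y|Z) := −32λ⁵/(ρ₀·(X+c)^{3/2}·(Y+c)^{3/2}·(Z+c)^{3/2}). Then for all X, Y, Z ≥ 1 with X ≠ Y and X ≠ Z: (W(X)+ν)·G₃(X|Y|Z) + (1/2)·∫₁^Ξ ρ(T)·(G₃(X|Y|Z)−G₃(T|Y|Z))/(X−T) dT = −λ·(H(X,Y|Z) + H(X,Z|Y)) − 2λ·G₂(X|Y)·G₂(X|Z), where the integrand is extended continuously to T = X. -/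

import Mathlib

set_option maxHeartbeats 1000000

open MeasureTheory

lemma deriv_aux (lam cst C X k : ℝ) {Y : ℝ} (hY : 0 < Y + cst) (hk : 0 < k) (hXY : X ≠ Y) :
    deriv (fun V' => (C - 4 * lam ^ 2 /
        (Real.sqrt (V' + cst) * k * (Real.sqrt (V' + cst) + k) ^ 2)) / (X - V')) Y =
      (2 * lam ^ 2 * (3 * Real.sqrt (Y + cst) + k) /
          (Real.sqrt (Y + cst) ^ 3 * k * (Real.sqrt (Y + cst) + k) ^ 3) * (X - Y) +
        C - 4 * lam ^ 2 / (Real.sqrt (Y + cst) * k * (Real.sqrt (Y + cst) + k) ^ 2)) /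
        (X - Y) ^ 2 := by
  have hb : 0 < Real.sqrt (Y + cst) := Real.sqrt_pos.mpr hY
  have hu : HasDerivAt (fun V' : ℝ => Real.sqrt (V' + cst)) (1 / (2 * Real.sqrt (Y + cst))) Y := by
    exact ((hasDerivAt_id' Y).add_const cst).sqrt hY.ne'
  have h1 : HasDerivAt (fun V' : ℝ => Real.sqrt (V' + cst) * k)
      (1 / (2 * Real.sqrt (Y + cst)) * k) Y := hu.mul_const k
  have h2 : HasDerivAt (fun V' : ℝ => (Real.sqrt (V' + cst) + k) ^ 2)
      ((2 : ℕ) * (Real.sqrt (Y + cst) + k) ^ 1 * (1 / (2 * Real.sqrt (Y + cst)))) Y :=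
    (hu.add_const k).pow 2
  have h3 : HasDerivAt (fun V' : ℝ => Real.sqrt (V' + cst) * k * (Real.sqrt (V' + cst) + k) ^ 2)
      (1 / (2 * Real.sqrt (Y + cst)) * k * (Real.sqrt (Y + cst) + k) ^ 2 +
        Real.sqrt (Y + cst) * k *
          ((2 : ℕ) * (Real.sqrt (Y + cst) + k) ^ 1 * (1 / (2 * Real.sqrt (Y + cst))))) Y :=
    h1.mul h2
  have hdne : Real.sqrt (Y + cst) * k * (Real.sqrt (Y + cst) + k) ^ 2 ≠ 0 :=
    ne_of_gt (mul_pos (mul_pos hb hk) (pow_pos (add_pos hb hk) 2))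
  have h4 : HasDerivAt
      (fun V' : ℝ => 4 * lam ^ 2 / (Real.sqrt (V' + cst) * k * (Real.sqrt (V' + cst) + k) ^ 2))
      ((0 * (Real.sqrt (Y + cst) * k * (Real.sqrt (Y + cst) + k) ^ 2) -
          4 * lam ^ 2 *
            (1 / (2 * Real.sqrt (Y + cst)) * k * (Real.sqrt (Y + cst) + k) ^ 2 +
              Real.sqrt (Y + cst) * k *
                ((2 : ℕ) * (Real.sqrt (Y + cst) + k) ^ 1 * (1 / (2 * Real.sqrt (Y + cst)))))) /
        (Real.sqrt (Y + cst) * k * (Real.sqrt (Y + cst) + k) ^ 2) ^ 2) Y :=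
    (hasDerivAt_const Y (4 * lam ^ 2)).div h3 hdne
  have h5 := (hasDerivAt_const Y C).sub h4
  have h6 : HasDerivAt (fun V' : ℝ => X - V') (0 - 1) Y :=
    (hasDerivAt_const Y X).sub (hasDerivAt_id Y)
  have hXYne : X - Y ≠ 0 := sub_ne_zero.mpr hXY
  have h7 := h5.div h6 hXYne
  rw [show (fun V' => (C - 4 * lam ^ 2 / (Real.sqrt (V' + cst) * k * (Real.sqrt (V' + cst) + k) ^ 2)) / (X - V')) =
      ((fun _ => C) - fun V' => 4 * lam ^ 2 / (Real.sqrt (V' + cst) * k * (Real.sqrt (V' + cst) + k) ^ 2)) /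
        fun V' => X - V' from rfl, h7.deriv, Pi.sub_apply]
  have hbk : Real.sqrt (Y + cst) + k ≠ 0 := (add_pos hb hk).ne'
  field_simp
  ring

theorem stmt_9 (Ξ c Z ν lam ρ₀ : ℝ) (hΞ : 1 < Ξ) (hc : -1 < c) (hZ : 0 < Z)
    (ρ : ℝ → ℝ) (hρ : ContinuousOn ρ (Set.Icc 1 Ξ))
    (W : ℝ → ℝ)
    (hW : ∀ X, W X = Real.sqrt (X + c) / Real.sqrt Z - ν +
      (1 / 2) * ∫ T in (1 : ℝ)..Ξ,
        ρ T / ((Real.sqrt (X + c) + Real.sqrt (T + c)) * Real.sqrt (T + c)))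
    (hρ₀ : ρ₀ = 1 / Real.sqrt Z -
      (1 / 2) * ∫ T in (1 : ℝ)..Ξ, ρ T / Real.sqrt (T + c) ^ 3)
    (hρ₀ne : ρ₀ ≠ 0)
    (G₂ : ℝ → ℝ → ℝ)
    (hG₂ : ∀ U V, G₂ U V = 4 * lam ^ 2 /
      (Real.sqrt (U + c) * Real.sqrt (V + c) * (Real.sqrt (U + c) + Real.sqrt (V + c)) ^ 2))
    (H : ℝ → ℝ → ℝ → ℝ)
    (hH : ∀ U V S, U ≠ V →
      H U V S = 16 * lam ^ 2 * deriv (fun V' => (G₂ U S - G₂ V' S) / (U - V')) V)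
    (G₃ : ℝ → ℝ → ℝ → ℝ)
    (hG₃ : ∀ X Y V, G₃ X Y V = -(32) * lam ^ 5 /
      (ρ₀ * Real.sqrt (X + c) ^ 3 * Real.sqrt (Y + c) ^ 3 * Real.sqrt (V + c) ^ 3)) :
    ∀ X Y V, 1 ≤ X → 1 ≤ Y → 1 ≤ V → X ≠ Y → X ≠ V →
      ∃ F : ℝ → ℝ, ContinuousOn F (Set.Icc 1 Ξ) ∧
        (∀ T ∈ Set.Icc 1 Ξ, T ≠ X → F T = ρ T * (G₃ X Y V - G₃ T Y V) / (X - T)) ∧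
        (W X + ν) * G₃ X Y V + (1 / 2) * ∫ T in (1 : ℝ)..Ξ, F T =
          -lam * (H X Y V + H X V Y) - 2 * lam * G₂ X Y * G₂ X V := by
  intro X Y V hX1 hY1 hV1 hXY hXV
  have hXc : 0 < X + c := by linarith
  have hYc : 0 < Y + c := by linarith
  have hVc : 0 < V + c := by linarith
  obtain ⟨a, ha_def⟩ : ∃ a', a' = Real.sqrt (X + c) := ⟨_, rfl⟩
  obtain ⟨b, hb_def⟩ : ∃ b', b' = Real.sqrt (Y + c) := ⟨_, rfl⟩
  obtain ⟨k, hk_def⟩ : ∃ k', k' = Real.sqrt (V + c) := ⟨_, rfl⟩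
  have ha : 0 < a := ha_def ▸ Real.sqrt_pos.mpr hXc
  have hb : 0 < b := hb_def ▸ Real.sqrt_pos.mpr hYc
  have hk : 0 < k := hk_def ▸ Real.sqrt_pos.mpr hVc
  have ha2 : a ^ 2 = X + c := ha_def ▸ Real.sq_sqrt hXc.le
  have hb2 : b ^ 2 = Y + c := hb_def ▸ Real.sq_sqrt hYc.le
  have hk2 : k ^ 2 = V + c := hk_def ▸ Real.sq_sqrt hVc.le
  have hZ' : 0 < Real.sqrt Z := Real.sqrt_pos.mpr hZ
  refine ⟨fun T => ρ T * (32 * lam ^ 5 * (a ^ 2 + a * Real.sqrt (T + c) + Real.sqrt (T + c) ^ 2) /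
      (ρ₀ * b ^ 3 * k ^ 3 * (a + Real.sqrt (T + c)) * a ^ 3 * Real.sqrt (T + c) ^ 3)), ?_, ?_, ?_⟩
  · -- continuity
    apply hρ.mul
    apply ContinuousOn.div
    · fun_prop
    · fun_prop
    · intro T hT
      have hTc : 0 < T + c := by have := hT.1; linarith
      have ht : 0 < Real.sqrt (T + c) := Real.sqrt_pos.mpr hTc
      exact mul_ne_zero (mul_ne_zero (mul_ne_zero (mul_ne_zero
        (mul_ne_zero hρ₀ne (pow_ne_zero 3 hb.ne')) (pow_ne_zero 3 hk.ne'))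
        (add_pos ha ht).ne') (pow_ne_zero 3 ha.ne')) (pow_ne_zero 3 ht.ne')
  · -- pointwise formula
    intro T hT hTX
    beta_reduce
    have hTc : 0 < T + c := by have := hT.1; linarith
    rw [hG₃ X Y V, hG₃ T Y V, ← ha_def, ← hb_def, ← hk_def]
    obtain ⟨t, ht_def⟩ : ∃ t', t' = Real.sqrt (T + c) := ⟨_, rfl⟩
    rw [← ht_def]
    have ht : 0 < t := ht_def ▸ Real.sqrt_pos.mpr hTc
    have ht2 : t ^ 2 = T + c := ht_def ▸ Real.sq_sqrt hTc.le
    have hXT : X - T = a ^ 2 - t ^ 2 := by rw [ha2, ht2]; ring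
    have hXTne : a ^ 2 - t ^ 2 ≠ 0 := by
      rw [← hXT]; exact sub_ne_zero.mpr (Ne.symm hTX)
    rw [hXT]
    have h1 : a + t ≠ 0 := (add_pos ha ht).ne'
    field_simp [hρ₀ne, ha.ne', hb.ne', hk.ne', ht.ne', h1, hXTne]
    ring
  · -- the main equation
    beta_reduce
    have huIcc : Set.uIcc (1:ℝ) Ξ = Set.Icc 1 Ξ := Set.uIcc_of_le hΞ.le
    have hg1c : ContinuousOn
        (fun T => ρ T / ((a + Real.sqrt (T + c)) * Real.sqrt (T + c))) (Set.Icc 1 Ξ) := by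
      apply hρ.div
      · fun_prop
      · intro T hT
        have hTc : 0 < T + c := by have := hT.1; linarith
        have ht : 0 < Real.sqrt (T + c) := Real.sqrt_pos.mpr hTc
        exact (mul_pos (add_pos ha ht) ht).ne'
    have hg2c : ContinuousOn (fun T => ρ T / Real.sqrt (T + c) ^ 3) (Set.Icc 1 Ξ) := by
      apply hρ.div
      · fun_prop
      · intro T hT
        have hTc : 0 < T + c := by have := hT.1; linarith
        exact (pow_pos (Real.sqrt_pos.mpr hTc) 3).ne'
    have hi1 : IntervalIntegrable
        (fun T => ρ T / ((a + Real.sqrt (T + c)) * Real.sqrt (T + c))) volume 1 Ξ :=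
      (huIcc ▸ hg1c).intervalIntegrable
    have hi2 : IntervalIntegrable (fun T => ρ T / Real.sqrt (T + c) ^ 3) volume 1 Ξ :=
      (huIcc ▸ hg2c).intervalIntegrable
    have hFg : Set.EqOn
        (fun T => ρ T * (32 * lam ^ 5 * (a ^ 2 + a * Real.sqrt (T + c) + Real.sqrt (T + c) ^ 2) /
          (ρ₀ * b ^ 3 * k ^ 3 * (a + Real.sqrt (T + c)) * a ^ 3 * Real.sqrt (T + c) ^ 3)))
        (fun T => (32 * lam ^ 5 / (ρ₀ * b ^ 3 * k ^ 3 * a ^ 3)) *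
            (ρ T / ((a + Real.sqrt (T + c)) * Real.sqrt (T + c))) +
          (32 * lam ^ 5 / (ρ₀ * b ^ 3 * k ^ 3 * a ^ 2)) * (ρ T / Real.sqrt (T + c) ^ 3))
        (Set.uIcc 1 Ξ) := by
      intro T hT
      rw [huIcc] at hT
      have hTc : 0 < T + c := by have := hT.1; linarith
      beta_reduce
      obtain ⟨t, ht_def⟩ : ∃ t', t' = Real.sqrt (T + c) := ⟨_, rfl⟩
      rw [← ht_def]
      have ht : 0 < t := ht_def ▸ Real.sqrt_pos.mpr hTc
      have h1 : a + t ≠ 0 := (add_pos ha ht).ne'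
      field_simp
      ring
    have hkey : (∫ T in (1:ℝ)..Ξ,
        ρ T * (32 * lam ^ 5 * (a ^ 2 + a * Real.sqrt (T + c) + Real.sqrt (T + c) ^ 2) /
          (ρ₀ * b ^ 3 * k ^ 3 * (a + Real.sqrt (T + c)) * a ^ 3 * Real.sqrt (T + c) ^ 3))) =
        (32 * lam ^ 5 / (ρ₀ * b ^ 3 * k ^ 3 * a ^ 3)) *
            (∫ T in (1:ℝ)..Ξ, ρ T / ((a + Real.sqrt (T + c)) * Real.sqrt (T + c))) +
          (32 * lam ^ 5 / (ρ₀ * b ^ 3 * k ^ 3 * a ^ 2)) *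
            (∫ T in (1:ℝ)..Ξ, ρ T / Real.sqrt (T + c) ^ 3) := by
      rw [intervalIntegral.integral_congr hFg,
        intervalIntegral.integral_add (hi1.const_mul _) (hi2.const_mul _),
        intervalIntegral.integral_const_mul, intervalIntegral.integral_const_mul]
    have hI1 : (∫ T in (1:ℝ)..Ξ, ρ T / ((a + Real.sqrt (T + c)) * Real.sqrt (T + c))) =
        2 * (W X + ν) - 2 * (a / Real.sqrt Z) := by
      have h := hW X
      rw [← ha_def] at h
      rw [h]; ring
    have hI2 : (∫ T in (1:ℝ)..Ξ, ρ T / Real.sqrt (T + c) ^ 3) =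
        2 * (1 / Real.sqrt Z) - 2 * ρ₀ := by
      rw [hρ₀]; ring
    have habne : a ^ 2 - b ^ 2 ≠ 0 := by rw [ha2, hb2]; intro h; exact hXY (by linarith)
    have hakne : a ^ 2 - k ^ 2 ≠ 0 := by rw [ha2, hk2]; intro h; exact hXV (by linarith)
    have hfun1 : (fun V' => (G₂ X V - G₂ V' V) / (X - V')) =
        fun V' => (G₂ X V - 4 * lam ^ 2 /
          (Real.sqrt (V' + c) * k * (Real.sqrt (V' + c) + k) ^ 2)) / (X - V') := by
      funext V'; rw [hG₂ V' V, ← hk_def]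
    have hfun2 : (fun V' => (G₂ X Y - G₂ V' Y) / (X - V')) =
        fun V' => (G₂ X Y - 4 * lam ^ 2 /
          (Real.sqrt (V' + c) * b * (Real.sqrt (V' + c) + b) ^ 2)) / (X - V') := by
      funext V'; rw [hG₂ V' Y, ← hb_def]
    have hRHS : -lam * (H X Y V + H X V Y) - 2 * lam * G₂ X Y * G₂ X V =
        -32 * lam ^ 5 / (a ^ 2 * b ^ 3 * k ^ 3) := by
      rw [hH X Y V hXY, hH X V Y hXV, hfun1, hfun2,
        deriv_aux lam c (G₂ X V) X k hYc hk hXY,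
        deriv_aux lam c (G₂ X Y) X b hVc hb hXV,
        hG₂ X V, hG₂ X Y, ← ha_def, ← hb_def, ← hk_def,
        show X - Y = a ^ 2 - b ^ 2 from by rw [ha2, hb2]; ring,
        show X - V = a ^ 2 - k ^ 2 from by rw [ha2, hk2]; ring]
      field_simp [ha.ne', hb.ne', hk.ne', (add_pos ha hb).ne', (add_pos ha hk).ne',
        (add_pos hb hk).ne', habne, hakne]
      ring
    rw [hG₃ X Y V, ← ha_def, ← hb_def, ← hk_def, hkey, hI1, hI2, hRHS]
    field_simp [hρ₀ne, ha.ne', hb.ne', hk.ne', hZ'.ne']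
    ring
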